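/- Let C^{p,q} (p ≥ −1, q ≥ 0) be a double complex of k-vector spaces with horizontal differential δ: C^{p,q} → C^{p+1,q} and vertical differential d, such that each row 0 → C^{−1,q} → C^{0,q} → C^{1,q} → ⋯ is exact. Let D^{p,q} be another such double complex with exact rows, and let π_p: C^{p,•} → D^{p,•} (p ≥ 0) together with P: C^{−1,•} → D^{−1,•} form a morphism of double complexes. If each π_p for p ≥ 0 is a quasi-isomorphism of cochain complexes, then P: C^{−1,•} → D^{−1,•} is a quasi-isomorphism. -/

import Mathlib

open CategoryTheory

namespace Stmt8Aux

variable {k : Type} [Field k]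

lemma hker {S₁ S₂ : ShortComplex (ModuleCat k)} (ψ : S₁ ⟶ S₂) :
    ∀ x ∈ LinearMap.ker S₁.g.hom, ψ.τ₂ x ∈ LinearMap.ker S₂.g.hom := fun x hx => by
  rw [LinearMap.mem_ker] at hx ⊢
  have h2 : S₂.g (ψ.τ₂ x) = ψ.τ₃ (S₁.g x) := ConcreteCategory.congr_hom ψ.comm₂₃ x
  have h3 : S₁.g x = 0 := hx
  exact h2.trans (by rw [h3, map_zero])

lemma hτf {S₁ S₂ : ShortComplex (ModuleCat k)} (ψ : S₁ ⟶ S₂) (z : S₁.X₁) :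
    ψ.τ₂ (S₁.f z) = S₂.f (ψ.τ₁ z) := by
  have : S₂.f (ψ.τ₁ z) = ψ.τ₂ (S₁.f z) := ConcreteCategory.congr_hom ψ.comm₁₂ z
  exact this.symm

lemma hle {S₁ S₂ : ShortComplex (ModuleCat k)} (ψ : S₁ ⟶ S₂) :
    LinearMap.range S₁.moduleCatToCycles ≤
      Submodule.comap (LinearMap.restrict ψ.τ₂.hom (hker ψ))
        (LinearMap.range S₂.moduleCatToCycles) := by
  rintro a ⟨z, rfl⟩
  refine Submodule.mem_comap.2 ⟨ψ.τ₁ z, ?_⟩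
  apply Subtype.ext
  exact (hτf ψ z).symm

noncomputable def lhmd {S₁ S₂ : ShortComplex (ModuleCat k)} (ψ : S₁ ⟶ S₂) :
    ShortComplex.LeftHomologyMapData ψ S₁.moduleCatLeftHomologyData
      S₂.moduleCatLeftHomologyData where
  φK := ModuleCat.ofHom (LinearMap.restrict ψ.τ₂.hom (hker ψ))
  φH := ModuleCat.ofHom (Submodule.mapQ _ _ (LinearMap.restrict ψ.τ₂.hom (hker ψ)) (hle ψ))
  commi := by
    ext x
    rfl
  commf' := by
    ext z
    apply Subtype.ext
    show ψ.τ₂ (S₁.f z) = S₂.f (ψ.τ₁ z)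
    exact hτf ψ z
  commπ := by
    ext x
    rfl

lemma quasiIso_iff_elem {S₁ S₂ : ShortComplex (ModuleCat k)} (ψ : S₁ ⟶ S₂) :
    ShortComplex.QuasiIso ψ ↔
      ((∀ x : S₁.X₂, S₁.g x = 0 → (∃ y, ψ.τ₂ x = S₂.f y) → ∃ z, S₁.f z = x) ∧
       (∀ u : S₂.X₂, S₂.g u = 0 → ∃ x, S₁.g x = 0 ∧ ∃ y, ψ.τ₂ x = u + S₂.f y)) := by
  rw [(lhmd ψ).quasiIso_iff, ConcreteCategory.isIso_iff_bijective]
  change Function.Bijective (Submodule.mapQ _ _ (LinearMap.restrict ψ.τ₂.hom (hker ψ)) (hle ψ)) ↔ _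
  have hφH : ∀ (a : LinearMap.ker S₁.g.hom),
      (Submodule.mapQ _ _ (LinearMap.restrict ψ.τ₂.hom (hker ψ)) (hle ψ)) (Submodule.Quotient.mk a)
        = Submodule.Quotient.mk (LinearMap.restrict ψ.τ₂.hom (hker ψ) a) := fun a => rfl
  have hmem₁ : ∀ (a : LinearMap.ker S₁.g.hom),
      a ∈ LinearMap.range S₁.moduleCatToCycles ↔ ∃ z, S₁.f z = a.1 := by
    intro a
    constructor
    · rintro ⟨z, rfl⟩; exact ⟨z, rfl⟩
    · rintro ⟨z, hz⟩; exact ⟨z, Subtype.ext hz⟩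
  have hmem₂ : ∀ (a : LinearMap.ker S₂.g.hom),
      a ∈ LinearMap.range S₂.moduleCatToCycles ↔ ∃ z, S₂.f z = a.1 := by
    intro a
    constructor
    · rintro ⟨z, rfl⟩; exact ⟨z, rfl⟩
    · rintro ⟨z, hz⟩; exact ⟨z, Subtype.ext hz⟩
  constructor
  · rintro ⟨hinj, hsurj⟩
    constructor
    · rintro x hx ⟨y, hy⟩
      have h0 : (Submodule.mapQ _ _ (LinearMap.restrict ψ.τ₂.hom (hker ψ)) (hle ψ)) (Submodule.Quotient.mk ⟨x, LinearMap.mem_ker.2 hx⟩) = 0 := by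
        rw [hφH, Submodule.Quotient.mk_eq_zero]
        exact (hmem₂ _).2 ⟨y, hy.symm⟩
      have h3 : (Submodule.Quotient.mk ⟨x, LinearMap.mem_ker.2 hx⟩ :
          _ ⧸ LinearMap.range S₁.moduleCatToCycles) = 0 :=
        hinj (by rw [h0, map_zero])
      rw [Submodule.Quotient.mk_eq_zero] at h3
      exact (hmem₁ _).1 h3
    · intro u hu
      obtain ⟨ξ, hξ⟩ := hsurj (Submodule.Quotient.mk ⟨u, LinearMap.mem_ker.2 hu⟩)
      obtain ⟨a, rfl⟩ := Submodule.Quotient.mk_surjective _ ξ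
      rw [hφH, Submodule.Quotient.eq] at hξ
      obtain ⟨y, hy⟩ := (hmem₂ _).1 hξ
      refine ⟨a.1, a.2, y, ?_⟩
      have h4 : S₂.f y = ψ.τ₂ a.1 - u := hy
      rw [h4]; abel
  · rintro ⟨h1, h2⟩
    constructor
    · rw [injective_iff_map_eq_zero]
      intro ξ hξ
      obtain ⟨a, rfl⟩ := Submodule.Quotient.mk_surjective _ ξ
      rw [hφH, Submodule.Quotient.mk_eq_zero] at hξ
      obtain ⟨y, hy⟩ := (hmem₂ _).1 hξ
      obtain ⟨z, hz⟩ := h1 a.1 a.2 ⟨y, hy.symm⟩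
      rw [Submodule.Quotient.mk_eq_zero]
      exact (hmem₁ a).2 ⟨z, hz⟩
    · intro ζ
      obtain ⟨b, rfl⟩ := Submodule.Quotient.mk_surjective _ ζ
      obtain ⟨x, hx, y, hy⟩ := h2 b.1 b.2
      refine ⟨Submodule.Quotient.mk ⟨x, LinearMap.mem_ker.2 hx⟩, ?_⟩
      rw [hφH, Submodule.Quotient.eq]
      refine (hmem₂ _).2 ⟨y, ?_⟩
      show S₂.f y = ψ.τ₂ x - b.1
      rw [hy]; abel


lemma zero_app (M N : ModuleCat k) (y : M) : (0 : M ⟶ N) y = 0 := rfl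

lemma quasiIsoAt_succ_iff {K L : CochainComplex (ModuleCat k) ℕ} (φ : K ⟶ L) (q : ℕ) :
    QuasiIsoAt φ (q+1) ↔
      ((∀ x : K.X (q+1), K.d (q+1) (q+2) x = 0 → (∃ y, φ.f (q+1) x = L.d q (q+1) y) →
          ∃ z, K.d q (q+1) z = x) ∧
       (∀ u : L.X (q+1), L.d (q+1) (q+2) u = 0 →
          ∃ x, K.d (q+1) (q+2) x = 0 ∧ ∃ y, φ.f (q+1) x = u + L.d q (q+1) y)) := by
  rw [quasiIsoAt_iff' φ q (q+1) (q+2) (CochainComplex.prev_nat_succ q) (CochainComplex.next ℕ (q+1)),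
    quasiIso_iff_elem]
  dsimp [HomologicalComplex.shortComplexFunctor']
  exact Iff.rfl

lemma quasiIsoAt_zero_iff {K L : CochainComplex (ModuleCat k) ℕ} (φ : K ⟶ L) :
    QuasiIsoAt φ 0 ↔
      ((∀ x : K.X 0, K.d 0 1 x = 0 → φ.f 0 x = 0 → x = 0) ∧
       (∀ u : L.X 0, L.d 0 1 u = 0 → ∃ x, K.d 0 1 x = 0 ∧ φ.f 0 x = u)) := by
  rw [quasiIsoAt_iff' φ 0 0 1 CochainComplex.prev_nat_zero (CochainComplex.next ℕ 0),
    quasiIso_iff_elem]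
  dsimp [HomologicalComplex.shortComplexFunctor']
  rw [K.shape 0 0 (by simp), L.shape 0 0 (by simp)]
  constructor <;> rintro ⟨h1, h2⟩ <;> refine ⟨?_, ?_⟩
  · intro x hx h0
    obtain ⟨z, hz⟩ := h1 x hx ⟨0, h0.trans rfl⟩
    exact hz.symm.trans rfl
  · intro u hu
    obtain ⟨x, hx, y, hy⟩ := h2 u hu
    exact ⟨x, hx, hy.trans (add_zero u)⟩
  · rintro x hx ⟨y, hy⟩
    refine ⟨0, ?_⟩
    rw [h1 x hx (hy.trans rfl)]; rfl
  · intro u hu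
    obtain ⟨x, hx, hxu⟩ := h2 u hu
    exact ⟨x, hx, 0, hxu.trans (add_zero u).symm⟩


/-- "boundary within the kernel subcomplex": at degree `0` it means being zero,
at degree `q+1` it means being the vertical differential of an element of degree `q`
killed by the horizontal map `δ`. -/
def KBnd {A B : CochainComplex (ModuleCat k) ℕ} (δ : A ⟶ B) :
    ∀ (q : ℕ), A.X q → Prop
  | 0, x => x = 0
  | (q+1), x => ∃ z : A.X q, δ.f q z = 0 ∧ A.d q (q+1) z = x

end Stmt8Aux

open Stmt8Aux

/-- Let `C^{p,q}` (`p ≥ −1`, `q ≥ 0`) be a double complex of `k`-vector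
spaces with exact rows (including the augmentation column `C^{−1,•}`), let `D^{p,q}` be
another such double complex with exact rows, and let `π_p : C^{p,•} → D^{p,•}` be a
morphism of double complexes. If `π_p` is a quasi-isomorphism for all `p ≥ 0`, then the
augmentation map `P = π_{−1} : C^{−1,•} → D^{−1,•}` is a quasi-isomorphism.

Here columns are reindexed by `p : ℕ`, with index `0` corresponding to `p = −1`;
each column is a cochain complex of `k`-modules indexed by `q : ℕ`. -/
theorem stmt_8 (k : Type) [Field k]
    (C D : ℕ → CochainComplex (ModuleCat k) ℕ)
    (δC : ∀ p, C p ⟶ C (p + 1)) (δD : ∀ p, D p ⟶ D (p + 1))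
    (π : ∀ p, C p ⟶ D p)
    (hcomm : ∀ p, π p ≫ δD p = δC p ≫ π (p + 1))
    (hrowC₀ : ∀ q, Function.Injective ((δC 0).f q))
    (hrowC : ∀ p q, LinearMap.range ((δC p).f q).hom = LinearMap.ker ((δC (p + 1)).f q).hom)
    (hrowD₀ : ∀ q, Function.Injective ((δD 0).f q))
    (hrowD : ∀ p q, LinearMap.range ((δD p).f q).hom = LinearMap.ker ((δD (p + 1)).f q).hom)
    (hqis : ∀ p, QuasiIso (π (p + 1))) :
    QuasiIso (π 0) := by
  -- elementwise helper facts
  have ddC : ∀ (n a b c : ℕ) (x : (C n).X a), (C n).d b c ((C n).d a b x) = 0 := by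
    intro n a b c x
    have h := ConcreteCategory.congr_hom ((C n).d_comp_d a b c) x
    rw [ConcreteCategory.comp_apply] at h
    rw [h]; rfl
  have ddD : ∀ (n a b c : ℕ) (x : (D n).X a), (D n).d b c ((D n).d a b x) = 0 := by
    intro n a b c x
    have h := ConcreteCategory.congr_hom ((D n).d_comp_d a b c) x
    rw [ConcreteCategory.comp_apply] at h
    rw [h]; rfl
  have dδC : ∀ (n a b : ℕ) (x : (C n).X a),
      (δC n).f b ((C n).d a b x) = (C (n+1)).d a b ((δC n).f a x) := by
    intro n a b x
    have h := ConcreteCategory.congr_hom ((δC n).comm a b) x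
    rw [ConcreteCategory.comp_apply, ConcreteCategory.comp_apply] at h
    exact h.symm
  have dδD : ∀ (n a b : ℕ) (x : (D n).X a),
      (δD n).f b ((D n).d a b x) = (D (n+1)).d a b ((δD n).f a x) := by
    intro n a b x
    have h := ConcreteCategory.congr_hom ((δD n).comm a b) x
    rw [ConcreteCategory.comp_apply, ConcreteCategory.comp_apply] at h
    exact h.symm
  have dπ : ∀ (n a b : ℕ) (x : (C n).X a),
      (π n).f b ((C n).d a b x) = (D n).d a b ((π n).f a x) := by
    intro n a b x
    have h := ConcreteCategory.congr_hom ((π n).comm a b) x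
    rw [ConcreteCategory.comp_apply, ConcreteCategory.comp_apply] at h
    exact h.symm
  have πδ : ∀ (n a : ℕ) (x : (C n).X a),
      (π (n+1)).f a ((δC n).f a x) = (δD n).f a ((π n).f a x) := by
    intro n a x
    have h : (π n).f a ≫ (δD n).f a = (δC n).f a ≫ (π (n+1)).f a := by
      rw [← HomologicalComplex.comp_f, ← HomologicalComplex.comp_f, hcomm n]
    have h2 := ConcreteCategory.congr_hom h x
    rw [ConcreteCategory.comp_apply, ConcreteCategory.comp_apply] at h2
    exact h2.symm
  have δδC : ∀ (n a : ℕ) (x : (C n).X a), (δC (n+1)).f a ((δC n).f a x) = 0 := by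
    intro n a x
    have : (δC n).f a x ∈ LinearMap.ker ((δC (n+1)).f a).hom := by
      rw [← hrowC n a]; exact ⟨x, rfl⟩
    exact LinearMap.mem_ker.1 this
  have δδD : ∀ (n a : ℕ) (x : (D n).X a), (δD (n+1)).f a ((δD n).f a x) = 0 := by
    intro n a x
    have : (δD n).f a x ∈ LinearMap.ker ((δD (n+1)).f a).hom := by
      rw [← hrowD n a]; exact ⟨x, rfl⟩
    exact LinearMap.mem_ker.1 this
  have surjC : ∀ (n a : ℕ) (y : (C (n+1)).X a), (δC (n+1)).f a y = 0 →
      ∃ x, (δC n).f a x = y := by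
    intro n a y hy
    have : y ∈ LinearMap.range ((δC n).f a).hom := by
      rw [hrowC n a]; exact LinearMap.mem_ker.2 hy
    exact this
  have surjD : ∀ (n a : ℕ) (y : (D (n+1)).X a), (δD (n+1)).f a y = 0 →
      ∃ x, (δD n).f a x = y := by
    intro n a y hy
    have : y ∈ LinearMap.range ((δD n).f a).hom := by
      rw [hrowD n a]; exact LinearMap.mem_ker.2 hy
    exact this
  -- quasi-isomorphism facts, elementwise
  have hQ : ∀ (n i : ℕ), QuasiIsoAt (π (n+1)) i := fun n i => (hqis n).1 i
  have qinj0 : ∀ (n : ℕ) (x : (C (n+1)).X 0),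
      (C (n+1)).d 0 1 x = 0 → (π (n+1)).f 0 x = 0 → x = 0 :=
    fun n => ((quasiIsoAt_zero_iff (π (n+1))).1 (hQ n 0)).1
  have qsurj0 : ∀ (n : ℕ) (u : (D (n+1)).X 0), (D (n+1)).d 0 1 u = 0 →
      ∃ x, (C (n+1)).d 0 1 x = 0 ∧ (π (n+1)).f 0 x = u :=
    fun n => ((quasiIsoAt_zero_iff (π (n+1))).1 (hQ n 0)).2
  have qinjS : ∀ (n q : ℕ) (x : (C (n+1)).X (q+1)), (C (n+1)).d (q+1) (q+2) x = 0 →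
      (∃ y, (π (n+1)).f (q+1) x = (D (n+1)).d q (q+1) y) →
      ∃ z, (C (n+1)).d q (q+1) z = x :=
    fun n q => ((quasiIsoAt_succ_iff (π (n+1)) q).1 (hQ n (q+1))).1
  have qsurjS : ∀ (n q : ℕ) (u : (D (n+1)).X (q+1)), (D (n+1)).d (q+1) (q+2) u = 0 →
      ∃ x, (C (n+1)).d (q+1) (q+2) x = 0 ∧
        ∃ y, (π (n+1)).f (q+1) x = u + (D (n+1)).d q (q+1) y :=
    fun n q => ((quasiIsoAt_succ_iff (π (n+1)) q).1 (hQ n (q+1))).2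
  -- the main induction on the degree `q`
  have main : ∀ (q : ℕ),
      (∀ (n : ℕ) (x : (C (n+1)).X q), (δC (n+1)).f q x = 0 → (C (n+1)).d q (q+1) x = 0 →
        KBnd (δD (n+1)) q ((π (n+1)).f q x) → KBnd (δC (n+1)) q x) ∧
      (∀ (n : ℕ) (u : (D (n+1)).X q), (δD (n+1)).f q u = 0 → (D (n+1)).d q (q+1) u = 0 →
        ∃ x : (C (n+1)).X q, (δC (n+1)).f q x = 0 ∧ (C (n+1)).d q (q+1) x = 0 ∧
          KBnd (δD (n+1)) q ((π (n+1)).f q x - u)) := by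
    intro q
    induction q with
    | zero =>
      constructor
      · intro n x hδ hd hb
        exact qinj0 n x hd hb
      · intro n u hδ hd
        obtain ⟨a, hda, hπa⟩ := qsurj0 n u hd
        have hδa : (δC (n+1)).f 0 a = 0 := by
          apply qinj0 (n+1)
          · rw [← dδC, hda, map_zero]
          · rw [πδ, hπa, hδ]
        refine ⟨a, hδa, hda, ?_⟩
        show (π (n+1)).f 0 a - u = 0
        rw [hπa, sub_self]
    | succ q ih =>
      obtain ⟨ihInj, ihSurj⟩ := ih
      have stepInj : ∀ (n : ℕ) (x : (C (n+1)).X (q+1)), (δC (n+1)).f (q+1) x = 0 →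
          (C (n+1)).d (q+1) (q+2) x = 0 →
          KBnd (δD (n+1)) (q+1) ((π (n+1)).f (q+1) x) → KBnd (δC (n+1)) (q+1) x := by
        rintro n x hδ hd ⟨y, hδy, hdy⟩
        obtain ⟨z, hz⟩ := qinjS n q x hd ⟨y, hdy.symm⟩
        have hcyc : (D (n+1)).d q (q+1) ((π (n+1)).f q z - y) = 0 := by
          rw [map_sub, ← dπ, hz, hdy, sub_self]
        cases q with
        | zero =>
          obtain ⟨w, hdw, hπw⟩ := qsurj0 n ((π (n+1)).f 0 z - y) hcyc
          refine ⟨z - w, ?_, ?_⟩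
          · apply qinj0 (n+1)
            · rw [← dδC, map_sub, hz, hdw, sub_zero, hδ]
            · rw [πδ, map_sub, hπw]
              have : (π (n+1)).f 0 z - ((π (n+1)).f 0 z - y) = y := by abel
              rw [this, hδy]
          · rw [map_sub, hz, hdw, sub_zero]
        | succ q' =>
          obtain ⟨w, hdw, v, hπw⟩ := qsurjS n q' ((π (n+1)).f (q'+1) z - y) hcyc
          have hπz₁ : (π (n+1)).f (q'+1) (z - w) = y - (D (n+1)).d q' (q'+1) v := by
            rw [map_sub, hπw]; abel
          have hKB : KBnd (δD (n+2)) (q'+1)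
              ((π (n+2)).f (q'+1) ((δC (n+1)).f (q'+1) (z - w))) := by
            refine ⟨-((δD (n+1)).f q' v), ?_, ?_⟩
            · rw [map_neg, δδD, neg_zero]
            · rw [map_neg, ← dδD, πδ, hπz₁, map_sub, hδy, zero_sub, dδD]
          obtain ⟨t, hδt, hdt⟩ := ihInj (n+1) ((δC (n+1)).f (q'+1) (z - w))
            (δδC _ _ _)
            (by rw [← dδC, map_sub, hz, hdw, sub_zero, hδ]) hKB
          obtain ⟨s, hs⟩ := surjC (n+1) q' t hδt
          refine ⟨z - w - (C (n+1)).d q' (q'+1) s, ?_, ?_⟩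
          · rw [map_sub, dδC, hs, hdt, sub_self]
          · rw [map_sub, map_sub, hz, hdw, sub_zero, ddC, sub_zero]
      have stepSurj : ∀ (n : ℕ) (u : (D (n+1)).X (q+1)), (δD (n+1)).f (q+1) u = 0 →
          (D (n+1)).d (q+1) (q+2) u = 0 →
          ∃ x : (C (n+1)).X (q+1), (δC (n+1)).f (q+1) x = 0 ∧
            (C (n+1)).d (q+1) (q+2) x = 0 ∧
            KBnd (δD (n+1)) (q+1) ((π (n+1)).f (q+1) x - u) := by
        intro n u hδu hdu
        obtain ⟨a, hda, b, hπa⟩ := qsurjS n q u hdu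
        have hKB : KBnd (δD (n+2)) (q+1) ((π (n+2)).f (q+1) ((δC (n+1)).f (q+1) a)) := by
          refine ⟨(δD (n+1)).f q b, δδD _ _ _, ?_⟩
          rw [← dδD, πδ, hπa, map_add, hδu, zero_add]
        obtain ⟨c, hδc, hdc⟩ := stepInj (n+1) ((δC (n+1)).f (q+1) a) (δδC _ _ _)
          (by rw [← dδC, hda, map_zero]) hKB
        obtain ⟨e, he⟩ := surjC (n+1) q c hδc
        have hdx₀ : (C (n+1)).d (q+1) (q+2) (a - (C (n+1)).d q (q+1) e) = 0 := by
          rw [map_sub, hda, ddC, sub_zero]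
        have hδx₀ : (δC (n+1)).f (q+1) (a - (C (n+1)).d q (q+1) e) = 0 := by
          rw [map_sub, dδC, he, hdc, sub_self]
        have hπx₀ : (π (n+1)).f (q+1) (a - (C (n+1)).d q (q+1) e)
            = u + (D (n+1)).d q (q+1) (b - (π (n+1)).f q e) := by
          rw [map_sub, hπa, dπ, map_sub]; abel
        have hdb₁' : (D (n+1)).d q (q+1) (b - (π (n+1)).f q e)
            = (π (n+1)).f (q+1) (a - (C (n+1)).d q (q+1) e) - u := by
          rw [hπx₀]; abel
        have hcycb : (D (n+2)).d q (q+1) ((δD (n+1)).f q (b - (π (n+1)).f q e)) = 0 := by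
          rw [← dδD, hdb₁', map_sub, hδu, sub_zero, ← πδ, hδx₀, map_zero]
        obtain ⟨g, hδg, hdg, hgb⟩ := ihSurj (n+1) ((δD (n+1)).f q (b - (π (n+1)).f q e))
          (δδD _ _ _) hcycb
        obtain ⟨f, hf⟩ := surjC (n+1) q g hδg
        have hδx : (δC (n+1)).f (q+1)
            ((a - (C (n+1)).d q (q+1) e) - (C (n+1)).d q (q+1) f) = 0 := by
          rw [map_sub, hδx₀, dδC, hf, hdg, zero_sub, neg_zero]
        have hdx : (C (n+1)).d (q+1) (q+2)
            ((a - (C (n+1)).d q (q+1) e) - (C (n+1)).d q (q+1) f) = 0 := by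
          rw [map_sub, hdx₀, ddC, zero_sub, neg_zero]
        cases q with
        | zero =>
          have hgb0 : (π (n+2)).f 0 g - (δD (n+1)).f 0 (b - (π (n+1)).f 0 e) = 0 := hgb
          refine ⟨(a - (C (n+1)).d 0 1 e) - (C (n+1)).d 0 1 f, hδx, hdx,
            ⟨(b - (π (n+1)).f 0 e) - (π (n+1)).f 0 f, ?_, ?_⟩⟩
          · rw [map_sub, ← πδ, hf]
            rw [sub_eq_zero] at hgb0 ⊢
            exact hgb0.symm
          · simp only [map_sub]
            rw [hπa, dπ, dπ]
            abel
        | succ q' =>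
          obtain ⟨h, hδh, hdh⟩ := hgb
          obtain ⟨m, hm⟩ := surjD (n+1) q' h hδh
          refine ⟨(a - (C (n+1)).d (q'+1) (q'+2) e) - (C (n+1)).d (q'+1) (q'+2) f, hδx, hdx,
            ⟨(b - (π (n+1)).f (q'+1) e) - (π (n+1)).f (q'+1) f + (D (n+1)).d q' (q'+1) m, ?_, ?_⟩⟩
          · rw [map_add, map_sub, ← πδ, hf, dδD, hm, hdh]
            abel
          · simp only [map_sub, map_add]
            rw [hπa, dπ, dπ, ddD]
            abel
      exact ⟨stepInj, stepSurj⟩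
  -- conclude for the augmentation map `π 0`
  rw [quasiIso_iff]
  intro i
  cases i with
  | zero =>
    rw [quasiIsoAt_zero_iff]
    constructor
    · intro x hd hπ
      have h0 : (δC 0).f 0 x = 0 := by
        apply (main 0).1 0 ((δC 0).f 0 x) (δδC _ _ _)
        · rw [← dδC, hd, map_zero]
        · show (π 1).f 0 ((δC 0).f 0 x) = 0
          rw [πδ, hπ, map_zero]
      apply hrowC₀ 0
      rw [h0, map_zero]
    · intro u hdu
      obtain ⟨x₁, hδx₁, hdx₁, hb⟩ := (main 0).2 0 ((δD 0).f 0 u) (δδD _ _ _)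
        (by rw [← dδD, hdu, map_zero])
      obtain ⟨x, hx⟩ := surjC 0 0 x₁ hδx₁
      have hb0 : (π 1).f 0 x₁ - (δD 0).f 0 u = 0 := hb
      refine ⟨x, ?_, ?_⟩
      · apply hrowC₀ 1
        rw [dδC, hx, hdx₁, map_zero]
      · apply hrowD₀ 0
        rw [← hx, πδ, sub_eq_zero] at hb0
        exact hb0
  | succ q =>
    rw [quasiIsoAt_succ_iff]
    constructor
    · rintro x hd ⟨y, hy⟩
      have hKB : KBnd (δD 1) (q+1) ((π 1).f (q+1) ((δC 0).f (q+1) x)) := by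
        refine ⟨(δD 0).f q y, δδD _ _ _, ?_⟩
        rw [← dδD, πδ, hy]
      obtain ⟨z', hδz', hdz'⟩ := (main (q+1)).1 0 ((δC 0).f (q+1) x) (δδC _ _ _)
        (by rw [← dδC, hd, map_zero]) hKB
      obtain ⟨w, hw⟩ := surjC 0 q z' hδz'
      refine ⟨w, ?_⟩
      apply hrowC₀ (q+1)
      rw [dδC, hw, hdz']
    · intro u hdu
      obtain ⟨x₁, hδx₁, hdx₁, hb⟩ := (main (q+1)).2 0 ((δD 0).f (q+1) u) (δδD _ _ _)
        (by rw [← dδD, hdu, map_zero])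
      obtain ⟨v, hδv, hdv⟩ := hb
      obtain ⟨x, hx⟩ := surjC 0 (q+1) x₁ hδx₁
      obtain ⟨w, hw⟩ := surjD 0 q v hδv
      refine ⟨x, ?_, w, ?_⟩
      · apply hrowC₀ (q+2)
        have e2 : q + 1 + 1 = q + 2 := rfl
        rw [dδC, hx, ← e2, hdx₁, map_zero]
      · apply hrowD₀ (q+1)
        simp only [Nat.reduceAdd] at hdv
        rw [map_add, ← πδ, hx, dδD, hw, hdv]
        abel
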